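/- arXiv:1509.03758 — 2 statements merged into one kernel-verified Lean document; each statement's English description precedes it below -/
import Mathlib

section
/- For 0 ≤ k ≤ n: if n is even then D(n,k) = D(n,n−k) and D̃(n,k) = D̃(n,n−k), while if n is odd then D(n,k) = D̃(n,n−k) and D̃(n,k) = D(n,n−k). -/
open MeasureTheory Finset

/-- Number of descents of a finite sequence given as a list. -/
def descCount {α : Type*} [LT α] [DecidableRel ((· < ·) : α → α → Prop)] : List α → ℕ
  | a :: b :: rest => (if b < a then 1 else 0) + descCount (b :: rest)
  | _ => 0

/-- Type A Eulerian number: permutations of {1,…,n} with k descents. -/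
def eulerianA (n k : ℕ) : ℕ :=
  Fintype.card {σ : Equiv.Perm (Fin n) // descCount (List.ofFn fun i => σ i) = k}

/-- Eulerian polynomial of type A. -/
noncomputable def polyA (n : ℕ) (t : ℝ) : ℝ :=
  ∑ k ∈ Finset.range (n + 1), (eulerianA n k : ℝ) * t ^ k

/-- The underlying set {-n, …, -1, 0, 1, …, n}. -/
abbrev BSet (n : ℕ) : Type := {x : ℤ // x ∈ Finset.Icc (-(n : ℤ)) (n : ℤ)}

def negB {n : ℕ} (x : BSet n) : BSet n :=
  ⟨-x.1, by have := x.2; simp only [Finset.mem_Icc] at *; omega⟩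

def posB {n : ℕ} (i : Fin n) : BSet n :=
  ⟨((i : ℕ) : ℤ) + 1, by have := i.isLt; simp only [Finset.mem_Icc]; omega⟩

/-- A permutation of {-n,…,n} is a signed permutation if σ(-k) = -σ(k). -/
def IsSigned {n : ℕ} (σ : Equiv.Perm (BSet n)) : Prop :=
  ∀ x : BSet n, (σ (negB x)).1 = -((σ x).1)

noncomputable instance {n : ℕ} (σ : Equiv.Perm (BSet n)) : Decidable (IsSigned σ) :=
  inferInstanceAs (Decidable (∀ x : BSet n, (σ (negB x)).1 = -((σ x).1)))

/-- Number of descents of the sequence (0, σ(1), …, σ(n)). -/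
def descB {n : ℕ} (σ : Equiv.Perm (BSet n)) : ℕ :=
  descCount ((0 : ℤ) :: List.ofFn fun i : Fin n => (σ (posB i)).1)

/-- Number of negative terms among σ(1), …, σ(n). -/
def negCount {n : ℕ} (σ : Equiv.Perm (BSet n)) : ℕ :=
  (Finset.univ.filter fun i : Fin n => (σ (posB i)).1 < 0).card

/-- Type B Eulerian number. -/
noncomputable def eulerianB (n k : ℕ) : ℕ :=
  Fintype.card {σ : Equiv.Perm (BSet n) // IsSigned σ ∧ descB σ = k}

/-- Primary type D Eulerian number. -/
noncomputable def eulerianD (n k : ℕ) : ℕ :=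
  Fintype.card {σ : Equiv.Perm (BSet n) //
    (IsSigned σ ∧ Even (negCount σ)) ∧ descB σ = k}

/-- Complementary type D Eulerian number. -/
noncomputable def eulerianDt (n k : ℕ) : ℕ :=
  Fintype.card {σ : Equiv.Perm (BSet n) //
    (IsSigned σ ∧ ¬ Even (negCount σ)) ∧ descB σ = k}

noncomputable def polyB (n : ℕ) (t : ℝ) : ℝ :=
  ∑ k ∈ Finset.range (n + 1), (eulerianB n k : ℝ) * t ^ k

noncomputable def polyD (n : ℕ) (t : ℝ) : ℝ :=
  ∑ k ∈ Finset.range (n + 1), (eulerianD n k : ℝ) * t ^ k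

noncomputable def polyDt (n : ℕ) (t : ℝ) : ℝ :=
  ∑ k ∈ Finset.range (n + 1), (eulerianDt n k : ℝ) * t ^ k


section Helpers

def zeroB (n : ℕ) : BSet n := ⟨0, by simp⟩

def negPerm (n : ℕ) : Equiv.Perm (BSet n) :=
  ⟨negB, negB, fun x => Subtype.ext (neg_neg _), fun x => Subtype.ext (neg_neg _)⟩

lemma negPerm_apply {n : ℕ} (x : BSet n) : ((negPerm n) x).1 = -x.1 := rfl

lemma isSigned_mul {n : ℕ} {σ : Equiv.Perm (BSet n)} (h : IsSigned σ) :
    IsSigned (negPerm n * σ) := by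
  intro x
  have := h x
  simp only [Equiv.Perm.mul_apply, negPerm_apply, this, neg_neg]

lemma negPerm_mul_negPerm (n : ℕ) : negPerm n * negPerm n = 1 := by
  ext x
  exact congrArg Subtype.val (Subtype.ext (neg_neg x.1) : negB (negB x) = x)

lemma isSigned_of_mul {n : ℕ} {σ : Equiv.Perm (BSet n)}
    (h : IsSigned (negPerm n * σ)) : IsSigned σ := by
  have := isSigned_mul h
  rwa [← mul_assoc, negPerm_mul_negPerm, one_mul] at this

lemma sigma_zero {n : ℕ} {σ : Equiv.Perm (BSet n)} (h : IsSigned σ) :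
    (σ (zeroB n)).1 = 0 := by
  have h0 : negB (zeroB n) = zeroB n := Subtype.ext (by simp [negB, zeroB])
  have := h (zeroB n)
  rw [h0] at this
  omega

lemma val_ne_zero {n : ℕ} {σ : Equiv.Perm (BSet n)} (h : IsSigned σ) (i : Fin n) :
    (σ (posB i)).1 ≠ 0 := by
  intro hz
  have : σ (posB i) = σ (zeroB n) := Subtype.ext (by rw [hz, sigma_zero h])
  have := σ.injective this
  have : ((i : ℕ) : ℤ) + 1 = 0 := congrArg Subtype.val this
  omega

lemma descCount_neg : ∀ l : List ℤ, l.Chain' (· ≠ ·) →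
    descCount (l.map (fun x => -x)) + descCount l = l.length - 1
  | [], _ => rfl
  | [_], _ => rfl
  | a :: b :: rest, h => by
    have h1 : a ≠ b := (List.isChain_cons_cons.mp h).1
    have ih := descCount_neg (b :: rest) (List.isChain_cons_cons.mp h).2
    simp only [List.map_cons, descCount, List.length_cons] at ih ⊢
    split_ifs <;> omega

lemma descB_add {n : ℕ} {σ : Equiv.Perm (BSet n)} (h : IsSigned σ) :
    descB (negPerm n * σ) + descB σ = n := by
  have hinj : Function.Injective (fun i : Fin n => (σ (posB i)).1) := by
    intro i j hij
    have : posB i = posB j := σ.injective (Subtype.ext hij)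
    have : ((i : ℕ) : ℤ) + 1 = ((j : ℕ) : ℤ) + 1 := congrArg Subtype.val this
    exact Fin.ext (by omega)
  have hchain : ((0:ℤ) :: List.ofFn fun i : Fin n => (σ (posB i)).1).Chain' (· ≠ ·) := by
    apply List.Pairwise.isChain
    refine List.Pairwise.cons ?_ (List.nodup_ofFn.mpr hinj)
    intro x hx
    simp only [List.mem_ofFn, Set.mem_range] at hx
    obtain ⟨i, rfl⟩ := hx
    exact fun e => val_ne_zero h i e.symm
  have hlist : ((0:ℤ) :: List.ofFn fun i : Fin n => ((negPerm n * σ) (posB i)).1)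
      = (((0:ℤ) :: List.ofFn fun i : Fin n => (σ (posB i)).1).map (fun x => -x)) := by
    simp only [List.map_cons, neg_zero, List.map_ofFn]
    rfl
  have := descCount_neg _ hchain
  unfold descB
  rw [hlist]
  simpa using this

lemma negCount_add {n : ℕ} {σ : Equiv.Perm (BSet n)} (h : IsSigned σ) :
    negCount (negPerm n * σ) + negCount σ = n := by
  unfold negCount
  have hcongr : (Finset.univ.filter fun i : Fin n => ((negPerm n * σ) (posB i)).1 < 0)
      = Finset.univ.filter fun i : Fin n => ¬ ((σ (posB i)).1 < 0) := by
    apply Finset.filter_congr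
    intro i _
    have := val_ne_zero h i
    simp only [Equiv.Perm.mul_apply, negPerm_apply]
    constructor <;> intro <;> omega
  rw [hcongr, add_comm, Finset.card_filter_add_card_filter_not]
  simp

lemma key (n k : ℕ) (hk : k ≤ n) (Q R : ℕ → Prop) [DecidablePred Q] [DecidablePred R]
    (hQR : ∀ a b : ℕ, a + b = n → (Q b ↔ R a)) :
    Fintype.card {σ : Equiv.Perm (BSet n) // (IsSigned σ ∧ Q (negCount σ)) ∧ descB σ = k}
    = Fintype.card {σ : Equiv.Perm (BSet n) //
        (IsSigned σ ∧ R (negCount σ)) ∧ descB σ = n - k} := by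
  apply Fintype.card_congr
  apply Equiv.subtypeEquiv (Equiv.mulLeft (negPerm n))
  intro σ
  simp only [Equiv.coe_mulLeft]
  constructor
  · rintro ⟨⟨hs, hq⟩, hd⟩
    have h1 := descB_add hs
    have h2 := negCount_add hs
    exact ⟨⟨isSigned_mul hs, (hQR _ _ h2).mp hq⟩, by omega⟩
  · rintro ⟨⟨hs', hr⟩, hd⟩
    have hs : IsSigned σ := isSigned_of_mul hs'
    have h1 := descB_add hs
    have h2 := negCount_add hs
    exact ⟨⟨hs, (hQR _ _ h2).mpr hr⟩, by omega⟩

end Helpers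

theorem stmt5 (n k : ℕ) (hk : k ≤ n) :
    (Even n → eulerianD n k = eulerianD n (n - k) ∧ eulerianDt n k = eulerianDt n (n - k)) ∧
    (Odd n → eulerianD n k = eulerianDt n (n - k) ∧ eulerianDt n k = eulerianD n (n - k)) := by
  constructor
  · intro hn
    constructor
    · exact key n k hk Even Even (fun a b hab => by
        have : Even (a + b) := hab ▸ hn
        rw [Nat.even_add] at this; tauto)
    · exact key n k hk (fun m => ¬ Even m) (fun m => ¬ Even m) (fun a b hab => by
        have : Even (a + b) := hab ▸ hn
        rw [Nat.even_add] at this; tauto)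
  · intro hn
    have hn' : ¬ Even n := Nat.not_even_iff_odd.mpr hn
    constructor
    · exact key n k hk Even (fun m => ¬ Even m) (fun a b hab => by
        have : ¬ Even (a + b) := hab ▸ hn'
        rw [Nat.even_add] at this; tauto)
    · exact key n k hk (fun m => ¬ Even m) Even (fun a b hab => by
        have : ¬ Even (a + b) := hab ▸ hn'
        rw [Nat.even_add] at this; tauto)
end

section
/- For all 0 ≤ k ≤ n, 2·D(n,k) = B(n,k) + (−1)^k·C(n,k) and 2·D̃(n,k) = B(n,k) − (−1)^k·C(n,k), where C(n,k) is the binomial coefficient. -/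
open MeasureTheory Finset

@[simp] lemma descCount_nil : descCount ([] : List ℤ) = 0 := rfl
@[simp] lemma descCount_singleton (a : ℤ) : descCount [a] = 0 := rfl
@[simp] lemma descCount_cons_cons (a b : ℤ) (l : List ℤ) :
    descCount (a :: b :: l) = (if b < a then 1 else 0) + descCount (b :: l) := rfl

lemma descCount_append_cons (u : List ℤ) (a : ℤ) (v : List ℤ) :
    descCount (u ++ a :: v) = descCount (u ++ [a]) + descCount (a :: v) := by
  induction u with
  | nil => simp
  | cons x u ih =>
    cases u with
    | nil => simp
    | cons y u' =>
      have h1 : (x :: y :: u') ++ a :: v = x :: ((y :: u') ++ a :: v) := rfl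
      have h2 : (x :: y :: u') ++ [a] = x :: ((y :: u') ++ [a]) := rfl
      have h3 : (y :: u') ++ a :: v = y :: (u' ++ a :: v) := rfl
      have h4 : (y :: u') ++ [a] = y :: (u' ++ [a]) := rfl
      rw [h1, h2, h3, h4, descCount_cons_cons, descCount_cons_cons]
      rw [h3, h4] at ih
      omega

lemma descCount_append_big (w : List ℤ) (a : ℤ) (hw : ∀ x ∈ w, x < a) :
    descCount (w ++ [a]) = descCount w := by
  induction w with
  | nil => simp
  | cons x w ih =>
    cases w with
    | nil =>
      have : ¬ a < x := by have := hw x (by simp); omega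
      simp [this]
    | cons y w' =>
      have h1 : (x :: y :: w') ++ [a] = x :: ((y :: w') ++ [a]) := rfl
      have h3 : (y :: w') ++ [a] = y :: (w' ++ [a]) := rfl
      rw [h1, h3, descCount_cons_cons, descCount_cons_cons]
      rw [h3] at ih
      rw [ih (fun z hz => hw z (by simp at hz ⊢; tauto))]

lemma descCount_append_small (w : List ℤ) (a : ℤ) (hne : w ≠ []) (hw : ∀ x ∈ w, a < x) :
    descCount (w ++ [a]) = descCount w + 1 := by
  induction w with
  | nil => exact absurd rfl hne
  | cons x w ih =>
    cases w with
    | nil =>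
      have : a < x := hw x (by simp)
      simp [this]
    | cons y w' =>
      have h1 : (x :: y :: w') ++ [a] = x :: ((y :: w') ++ [a]) := rfl
      have h3 : (y :: w') ++ [a] = y :: (w' ++ [a]) := rfl
      rw [h1, h3, descCount_cons_cons, descCount_cons_cons]
      rw [h3] at ih
      rw [ih (by simp) (fun z hz => hw z (by simp at hz ⊢; tauto))]
      omega

lemma insertIdx_eq_take_drop (a : ℤ) : ∀ (n : ℕ) (l : List ℤ), n ≤ l.length →
    l.insertIdx n a = l.take n ++ a :: l.drop n := by
  intro n l
  induction l generalizing n with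
  | nil => intro h; simp at h; simp [h]
  | cons x t ih =>
    intro h
    cases n with
    | zero => simp
    | succ m => simp [List.insertIdx_succ_cons, ih m (by simpa using h)]

lemma ofFn_eq_insertIdx : ∀ (n : ℕ) (v : Fin (n+1) → ℤ) (j : Fin (n+1)),
    List.ofFn v = (List.ofFn (fun i => v (j.succAbove i))).insertIdx (j : ℕ) (v j) := by
  intro n
  induction n with
  | zero =>
    intro v j
    have hj : j = 0 := Fin.ext (by omega)
    subst hj
    simp [List.ofFn_succ]
  | succ n ih =>
    intro v j
    cases j using Fin.cases with
    | zero => simp [List.ofFn_succ, Fin.succAbove_zero]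
    | succ j' =>
      have hs : (fun i : Fin n => v (j'.succ.succAbove i.succ)) = fun i => v ((j'.succAbove i).succ) := by
        funext i; rw [Fin.succ_succAbove_succ]
      calc List.ofFn v = v 0 :: List.ofFn (fun i => v i.succ) := List.ofFn_succ (f := v)
        _ = v 0 :: List.insertIdx (List.ofFn fun i => v ((j'.succAbove i).succ)) (j' : ℕ) (v j'.succ) := by
            rw [ih (fun i => v i.succ) j']
        _ = List.insertIdx (v 0 :: List.ofFn fun i => v ((j'.succAbove i).succ)) ((j' : ℕ) + 1) (v j'.succ) := by
            rw [List.insertIdx_succ_cons]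
        _ = List.insertIdx (List.ofFn fun i => v (j'.succ.succAbove i)) ((j'.succ : Fin (n+2)) : ℕ) (v j'.succ) := by
            rw [List.ofFn_succ (f := fun i => v (j'.succ.succAbove i)), Fin.succ_succAbove_zero, hs, Fin.val_succ]

-- ## signed words from (π, ε)

def sval {n : ℕ} (π : Equiv.Perm (Fin n)) (ε : Fin n → Bool) (i : Fin n) : ℤ :=
  if ε i then -(((π i : ℕ) : ℤ) + 1) else ((π i : ℕ) : ℤ) + 1

def Lw {n : ℕ} (π : Equiv.Perm (Fin n)) (ε : Fin n → Bool) : List ℤ := List.ofFn (sval π ε)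

def Nc {n : ℕ} (ε : Fin n → Bool) : ℕ := ∑ i : Fin n, (if ε i then 1 else 0)

def Gs (n k : ℕ) : ℤ :=
  ∑ x : Equiv.Perm (Fin n) × (Fin n → Bool),
    (-1) ^ (Nc x.2) * (if descCount ((0:ℤ) :: Lw x.1 x.2) = k then 1 else 0)

lemma sval_bound {n : ℕ} (π : Equiv.Perm (Fin n)) (ε : Fin n → Bool) (i : Fin n) :
    -(n:ℤ) ≤ sval π ε i ∧ sval π ε i ≤ n ∧ sval π ε i ≠ 0 := by
  have : (π i : ℕ) < n := (π i).isLt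
  unfold sval; split <;> constructor <;> omega

lemma Lw_length {n : ℕ} (π : Equiv.Perm (Fin n)) (ε : Fin n → Bool) : (Lw π ε).length = n := by
  simp [Lw]

lemma Lw_bound {n : ℕ} (π : Equiv.Perm (Fin n)) (ε : Fin n → Bool) :
    ∀ x ∈ Lw π ε, -(n:ℤ) ≤ x ∧ x ≤ n := by
  intro x hx
  rw [Lw, List.mem_ofFn] at hx
  obtain ⟨i, rfl⟩ := hx
  exact ⟨(sval_bound π ε i).1, (sval_bound π ε i).2.1⟩

-- ## insertion of the maximum

def insP {n : ℕ} (j : Fin (n+1)) (π : Equiv.Perm (Fin n)) : Equiv.Perm (Fin (n+1)) :=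
  (finSuccEquiv' j).trans ((Equiv.optionCongr π).trans (finSuccEquiv' (Fin.last n)).symm)

@[simp] lemma insP_at {n : ℕ} (j : Fin (n+1)) (π : Equiv.Perm (Fin n)) :
    insP j π j = Fin.last n := by
  simp [insP]

@[simp] lemma insP_succAbove {n : ℕ} (j : Fin (n+1)) (π : Equiv.Perm (Fin n)) (i : Fin n) :
    insP j π (j.succAbove i) = (π i).castSucc := by
  simp [insP]

def extB {n : ℕ} (j : Fin (n+1)) (b : Bool) (ε : Fin n → Bool) : Fin (n+1) → Bool :=
  fun i => (finSuccEquiv' j i).elim b ε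

@[simp] lemma extB_at {n : ℕ} (j : Fin (n+1)) (b : Bool) (ε : Fin n → Bool) :
    extB j b ε j = b := by simp [extB]

@[simp] lemma extB_succAbove {n : ℕ} (j : Fin (n+1)) (b : Bool) (ε : Fin n → Bool) (i : Fin n) :
    extB j b ε (j.succAbove i) = ε i := by simp [extB]

lemma Nc_extB {n : ℕ} (j : Fin (n+1)) (b : Bool) (ε : Fin n → Bool) :
    Nc (extB j b ε) = (if b then 1 else 0) + Nc ε := by
  unfold Nc
  rw [Fin.sum_univ_succAbove (fun i => if extB j b ε i then 1 else 0) j]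
  simp

lemma Lw_insP {n : ℕ} (j : Fin (n+1)) (b : Bool) (π : Equiv.Perm (Fin n)) (ε : Fin n → Bool) :
    Lw (insP j π) (extB j b ε) =
      (Lw π ε).insertIdx (j : ℕ) (if b then -((n:ℤ)+1) else (n:ℤ)+1) := by
  unfold Lw
  have h1 : sval (insP j π) (extB j b ε) j = (if b then -((n:ℤ)+1) else (n:ℤ)+1) := by
    simp only [sval, insP_at, extB_at, Fin.val_last]
  have h2 : (fun i => sval (insP j π) (extB j b ε) (j.succAbove i)) = sval π ε := by
    funext i
    simp only [sval, insP_succAbove, extB_succAbove, Fin.coe_castSucc]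
  rw [ofFn_eq_insertIdx n (sval (insP j π) (extB j b ε)) j, h1, h2]

-- ## descent behaviour of insertion

lemma desc_insert_last {n : ℕ} (L : List ℤ) (hlen : L.length = n)
    (hL : ∀ x ∈ L, -(n:ℤ) ≤ x ∧ x ≤ n) (b : Bool) :
    descCount ((0:ℤ) :: L.insertIdx n (if b then -((n:ℤ)+1) else (n:ℤ)+1))
      = descCount ((0:ℤ) :: L) + (if b then 1 else 0) := by
  rw [insertIdx_eq_take_drop (if b then -((n:ℤ)+1) else (n:ℤ)+1) n L (by omega)]
  have ht : L.take n = L := by rw [← hlen]; exact List.take_length (l := L)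
  have hd : L.drop n = [] := by rw [← hlen]; exact List.drop_length (l := L)
  rw [ht, hd]
  have hform : (0:ℤ) :: (L ++ [if b then -((n:ℤ)+1) else (n:ℤ)+1]) =
      ((0:ℤ) :: L) ++ [if b then -((n:ℤ)+1) else (n:ℤ)+1] := rfl
  rw [hform]
  cases b with
  | false =>
    simp only [if_false, Bool.false_eq_true]
    rw [descCount_append_big]
    · omega
    · intro x hx
      rcases List.mem_cons.mp hx with rfl | hx
      · omega
      · have := (hL x hx).2; omega
  | true =>
    simp only [if_true]
    rw [descCount_append_small _ _ (by simp)]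
    intro x hx
    rcases List.mem_cons.mp hx with rfl | hx
    · omega
    · have := (hL x hx).1; omega

lemma desc_insert_mid {n : ℕ} (L : List ℤ) (hlen : L.length = n)
    (hL : ∀ x ∈ L, -(n:ℤ) ≤ x ∧ x ≤ n) (j : ℕ) (hj : j < n) (b : Bool) :
    descCount ((0:ℤ) :: L.insertIdx j (if b then -((n:ℤ)+1) else (n:ℤ)+1))
      = descCount ((0:ℤ) :: L.insertIdx j ((n:ℤ)+1)) := by
  cases b with
  | false => simp
  | true =>
  simp only [if_true]
  have hjL : j < L.length := by omega
  have key : ∀ m : ℤ, descCount ((0:ℤ) :: L.insertIdx j m)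
      = descCount (((0:ℤ) :: L.take j) ++ [m]) + ((if L[j] < m then 1 else 0) + descCount (L[j] :: L.drop (j+1))) := by
    intro m
    rw [insertIdx_eq_take_drop m j L (by omega), List.drop_eq_getElem_cons hjL]
    have hform : (0:ℤ) :: (L.take j ++ m :: L[j] :: L.drop (j+1)) =
        ((0:ℤ) :: L.take j) ++ m :: (L[j] :: L.drop (j+1)) := rfl
    rw [hform, descCount_append_cons, descCount_cons_cons]
  rw [key, key]
  have hbound : ∀ x ∈ (0:ℤ) :: L.take j, -(n:ℤ) ≤ x ∧ x ≤ n := by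
    intro x hx
    rcases List.mem_cons.mp hx with rfl | hx
    · constructor <;> omega
    · exact hL x (List.take_subset j L hx)
  have hgb := hL L[j] (List.getElem_mem hjL)
  rw [descCount_append_small _ _ (by simp) (fun x hx => by have := (hbound x hx).1; omega)]
  rw [descCount_append_big _ _ (fun x hx => by have := (hbound x hx).2; omega)]
  have h1 : ¬ (L[j] < -((n:ℤ)+1)) := by omega
  have h2 : L[j] < (n:ℤ)+1 := by omega
  rw [if_neg h1, if_pos h2]
  omega

-- ## the reindexing bijection

def Theta (n : ℕ) (x : (Fin (n+1) × Bool) × (Equiv.Perm (Fin n) × (Fin n → Bool))) :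
    Equiv.Perm (Fin (n+1)) × (Fin (n+1) → Bool) :=
  (insP x.1.1 x.2.1, extB x.1.1 x.1.2 x.2.2)

lemma Theta_bijective (n : ℕ) : Function.Bijective (Theta n) := by
  rw [Fintype.bijective_iff_injective_and_card]
  constructor
  · rintro ⟨⟨j, b⟩, ⟨π, ε⟩⟩ ⟨⟨j₂, b₂⟩, ⟨π₂, ε₂⟩⟩ h
    rw [Theta, Theta, Prod.mk.injEq] at h
    obtain ⟨h1, h2⟩ := h
    have hj : j = j₂ := by
      have e1 : insP j π j = Fin.last n := insP_at j π
      have e2 : insP j₂ π₂ j₂ = Fin.last n := insP_at j₂ π₂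
      rw [h1] at e1
      exact (insP j₂ π₂).injective (e1.trans e2.symm)
    subst hj
    have hπ : π = π₂ := by
      apply Equiv.ext
      intro i
      have := congrArg (fun σ : Equiv.Perm (Fin (n+1)) => σ (j.succAbove i)) h1
      simp only [insP_succAbove] at this
      exact Fin.castSucc_injective n this
    have hb : b = b₂ := by
      have := congrFun h2 j
      simpa using this
    have hε : ε = ε₂ := by
      funext i
      have := congrFun h2 (j.succAbove i)
      simpa using this
    simp [hπ, hb, hε]
  · simp [Fintype.card_prod, Fintype.card_perm, Fintype.card_fun, Nat.factorial_succ, Fintype.card_fin]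
    ring

-- ## recursion for Gs

lemma Gs_succ (n k : ℕ) :
    Gs (n+1) k = Gs n k - ∑ x : Equiv.Perm (Fin n) × (Fin n → Bool),
      (-1) ^ (Nc x.2) * (if descCount ((0:ℤ) :: Lw x.1 x.2) + 1 = k then 1 else 0) := by
  have hre := Fintype.sum_bijective (Theta n) (Theta_bijective n)
    (fun y => (-1:ℤ) ^ (Nc (Theta n y).2) *
      (if descCount ((0:ℤ) :: Lw (Theta n y).1 (Theta n y).2) = k then 1 else 0))
    (fun x => (-1:ℤ) ^ (Nc x.2) * (if descCount ((0:ℤ) :: Lw x.1 x.2) = k then 1 else 0))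
    (fun y => rfl)
  rw [Gs, ← hre]
  rw [Fintype.sum_prod_type]
  -- outer sum over (j,b), rewrite as sum over j then b
  rw [Fintype.sum_prod_type]
  -- now  ∑ j, ∑ b, ∑ pe, F
  have hterm : ∀ (j : Fin (n+1)) (b : Bool) (pe : Equiv.Perm (Fin n) × (Fin n → Bool)),
      (-1:ℤ) ^ (Nc (Theta n ((j,b),pe)).2) *
        (if descCount ((0:ℤ) :: Lw (Theta n ((j,b),pe)).1 (Theta n ((j,b),pe)).2) = k then 1 else 0)
      = (if b then -1 else 1) * ((-1:ℤ) ^ (Nc pe.2) *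
          (if descCount ((0:ℤ) :: (Lw pe.1 pe.2).insertIdx (j:ℕ)
              (if b then -((n:ℤ)+1) else (n:ℤ)+1)) = k then 1 else 0)) := by
    intro j b pe
    rw [Theta]
    simp only
    rw [Nc_extB, Lw_insP, pow_add]
    cases b <;> simp <;> ring
  -- split off j = last
  rw [Fin.sum_univ_castSucc (fun j : Fin (n+1) => ∑ b : Bool,
    ∑ pe : Equiv.Perm (Fin n) × (Fin n → Bool),
      (-1:ℤ) ^ (Nc (Theta n ((j,b),pe)).2) *
        (if descCount ((0:ℤ) :: Lw (Theta n ((j,b),pe)).1 (Theta n ((j,b),pe)).2) = k then 1 else 0))]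
  have hmid : ∀ j : Fin n, (∑ b : Bool, ∑ pe : Equiv.Perm (Fin n) × (Fin n → Bool),
      (-1:ℤ) ^ (Nc (Theta n ((j.castSucc,b),pe)).2) *
        (if descCount ((0:ℤ) :: Lw (Theta n ((j.castSucc,b),pe)).1 (Theta n ((j.castSucc,b),pe)).2) = k then 1 else 0)) = 0 := by
    intro j
    rw [Finset.sum_comm]
    apply Finset.sum_eq_zero
    intro pe _
    rw [Fintype.sum_bool]
    rw [hterm, hterm]
    have hmid' := desc_insert_mid (Lw pe.1 pe.2) (Lw_length pe.1 pe.2) (Lw_bound pe.1 pe.2)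
      (j.castSucc : ℕ) (by simpa using j.isLt) 
    have ht := hmid' true
    simp only [if_true, if_false, Bool.false_eq_true] at ht ⊢
    rw [ht]
    ring
  rw [Finset.sum_congr rfl (fun j _ => hmid j), Finset.sum_const_zero, zero_add]
  -- the j = last term
  rw [Fintype.sum_bool]
  have hlast : ∀ (b : Bool) (pe : Equiv.Perm (Fin n) × (Fin n → Bool)),
      descCount ((0:ℤ) :: (Lw pe.1 pe.2).insertIdx ((Fin.last n : Fin (n+1)):ℕ)
          (if b then -((n:ℤ)+1) else (n:ℤ)+1))
        = descCount ((0:ℤ) :: Lw pe.1 pe.2) + (if b then 1 else 0) := by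
    intro b pe
    rw [Fin.val_last]
    exact desc_insert_last (Lw pe.1 pe.2) (Lw_length pe.1 pe.2) (Lw_bound pe.1 pe.2) b
  have hsum : ∀ b : Bool, (∑ pe : Equiv.Perm (Fin n) × (Fin n → Bool),
      (-1:ℤ) ^ (Nc (Theta n ((Fin.last n,b),pe)).2) *
        (if descCount ((0:ℤ) :: Lw (Theta n ((Fin.last n,b),pe)).1 (Theta n ((Fin.last n,b),pe)).2) = k then 1 else 0))
      = (if b then -1 else 1) * ∑ pe : Equiv.Perm (Fin n) × (Fin n → Bool),
          (-1:ℤ) ^ (Nc pe.2) *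
          (if descCount ((0:ℤ) :: Lw pe.1 pe.2) + (if b then 1 else 0) = k then 1 else 0) := by
    intro b
    rw [Finset.mul_sum]
    apply Finset.sum_congr rfl
    intro pe _
    rw [hterm, hlast]
  rw [hsum true, hsum false]
  simp only [if_true, if_false, Bool.false_eq_true, add_zero]
  rw [Gs]
  ring

lemma Gs_eq : ∀ n k : ℕ, Gs n k = (-1:ℤ)^k * (n.choose k : ℤ) := by
  intro n
  induction n with
  | zero =>
    intro k
    have hconst : ∀ x : Equiv.Perm (Fin 0) × (Fin 0 → Bool),
        (-1:ℤ) ^ (Nc x.2) * (if descCount ((0:ℤ) :: Lw x.1 x.2) = k then 1 else 0)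
          = (if k = 0 then 1 else 0) := by
      intro x
      have h1 : Nc x.2 = 0 := by simp [Nc]
      have h2 : Lw x.1 x.2 = [] := by simp [Lw]
      rw [h1, h2]
      simp [eq_comm]
    rw [Gs, Finset.sum_congr rfl (fun x _ => hconst x), Finset.sum_const]
    have hcard : Fintype.card (Equiv.Perm (Fin 0) × (Fin 0 → Bool)) = 1 := by
      simp [Fintype.card_prod, Fintype.card_perm, Fintype.card_fun]
    rw [Finset.card_univ, hcard]
    cases k with
    | zero => simp
    | succ k' => simp [Nat.choose]
  | succ n ih =>
    intro k
    rw [Gs_succ]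
    cases k with
    | zero =>
      have hz : ∀ x : Equiv.Perm (Fin n) × (Fin n → Bool),
          (-1:ℤ) ^ (Nc x.2) * (if descCount ((0:ℤ) :: Lw x.1 x.2) + 1 = 0 then 1 else 0) = 0 := by
        intro x; simp
      rw [Finset.sum_congr rfl (fun x _ => hz x), Finset.sum_const_zero, sub_zero, ih 0]
      simp
    | succ k' =>
      have hs : ∀ x : Equiv.Perm (Fin n) × (Fin n → Bool),
          (-1:ℤ) ^ (Nc x.2) * (if descCount ((0:ℤ) :: Lw x.1 x.2) + 1 = k' + 1 then 1 else 0)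
            = (-1:ℤ) ^ (Nc x.2) * (if descCount ((0:ℤ) :: Lw x.1 x.2) = k' then 1 else 0) := by
        intro x; simp
      rw [Finset.sum_congr rfl (fun x _ => hs x)]
      have h2 : (∑ x : Equiv.Perm (Fin n) × (Fin n → Bool),
          (-1:ℤ) ^ (Nc x.2) * (if descCount ((0:ℤ) :: Lw x.1 x.2) = k' then 1 else 0)) = Gs n k' := rfl
      rw [h2, ih (k'+1), ih k', Nat.choose_succ_succ]
      push_cast
      ring

-- ## from (π,ε) to a signed permutation of BSet n

lemma sval_bound' {n : ℕ} (π : Equiv.Perm (Fin n)) (ε : Fin n → Bool) (i : Fin n) :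
    -(n:ℤ) ≤ sval π ε i ∧ sval π ε i ≤ n ∧ sval π ε i ≠ 0 := by
  have : (π i : ℕ) < n := (π i).isLt
  unfold sval; split <;> constructor <;> omega

lemma sval_natAbs {n : ℕ} (π : Equiv.Perm (Fin n)) (ε : Fin n → Bool) (i : Fin n) :
    (sval π ε i).natAbs = (π i : ℕ) + 1 := by
  unfold sval; split <;> omega

lemma sval_neg_iff {n : ℕ} (π : Equiv.Perm (Fin n)) (ε : Fin n → Bool) (i : Fin n) :
    sval π ε i < 0 ↔ ε i = true := by
  unfold sval
  rcases h : ε i <;> simp [h] <;> omega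

def bfun {n : ℕ} (π : Equiv.Perm (Fin n)) (ε : Fin n → Bool) (x : BSet n) : BSet n :=
  if h : x.1.natAbs - 1 < n then
    ⟨x.1.sign * sval π ε ⟨x.1.natAbs - 1, h⟩, by
      have hb := sval_bound' π ε ⟨x.1.natAbs - 1, h⟩
      have hs : x.1.sign = -1 ∨ x.1.sign = 0 ∨ x.1.sign = 1 := by
        rcases Int.lt_trichotomy x.1 0 with h' | h' | h'
        · left; exact Int.sign_eq_neg_one_of_neg h'
        · right; left; rw [h']; rfl
        · right; right; exact Int.sign_eq_one_of_pos h'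
      simp only [Finset.mem_Icc]
      rcases hs with hs | hs | hs <;> rw [hs] <;> constructor <;> omega⟩
  else x

lemma bfun_val_natAbs_lt {n : ℕ} (x : BSet n) (hn : 0 < n) : x.1.natAbs - 1 < n := by
  have := x.2
  simp only [Finset.mem_Icc] at this
  omega

lemma bfun_posB {n : ℕ} (π : Equiv.Perm (Fin n)) (ε : Fin n → Bool) (i : Fin n) :
    (bfun π ε (posB i)).1 = sval π ε i := by
  have hn : 0 < n := i.pos
  have h : (posB i).1.natAbs - 1 < n := bfun_val_natAbs_lt _ hn
  have hidx : (⟨(posB i).1.natAbs - 1, h⟩ : Fin n) = i := by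
    apply Fin.ext
    show (posB i).1.natAbs - 1 = (i : ℕ)
    simp only [posB]
    omega
  have hsign : (posB i).1.sign = 1 := by
    apply Int.sign_eq_one_of_pos
    simp only [posB]
    omega
  rw [bfun, dif_pos h]
  show (posB i).1.sign * sval π ε ⟨(posB i).1.natAbs - 1, h⟩ = sval π ε i
  rw [hidx, hsign, one_mul]

lemma bfun_negB {n : ℕ} (π : Equiv.Perm (Fin n)) (ε : Fin n → Bool) (x : BSet n) :
    (bfun π ε (negB x)).1 = -((bfun π ε x).1) := by
  have habs : (negB x).1.natAbs = x.1.natAbs := by simp [negB]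
  by_cases h : x.1.natAbs - 1 < n
  · have h' : (negB x).1.natAbs - 1 < n := by rw [habs]; exact h
    rw [bfun, bfun, dif_pos h, dif_pos h']
    show (negB x).1.sign * sval π ε _ = -(x.1.sign * sval π ε _)
    have : (⟨(negB x).1.natAbs - 1, h'⟩ : Fin n) = ⟨x.1.natAbs - 1, h⟩ := by
      apply Fin.ext; simp [habs]
    rw [this]
    show (-x.1).sign * _ = _
    rw [Int.sign_neg]
    ring
  · have h' : ¬ ((negB x).1.natAbs - 1 < n) := by rw [habs]; exact h
    rw [bfun, bfun, dif_neg h, dif_neg h']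
    -- here n = 0 is forced, so x = 0
    have hx := x.2
    simp only [Finset.mem_Icc] at hx
    have hn : n = 0 := by
      by_contra hn
      exact h (by omega)
    show (negB x).1 = -x.1
    simp [negB]

lemma bfun_injective {n : ℕ} (π : Equiv.Perm (Fin n)) (ε : Fin n → Bool) :
    Function.Injective (bfun π ε) := by
  intro x y hxy
  rcases Nat.eq_zero_or_pos n with hn | hn
  · apply Subtype.ext
    have hx := x.2; have hy := y.2
    simp only [Finset.mem_Icc, hn] at hx hy
    push_cast at hx hy
    omega
  · have hx : x.1.natAbs - 1 < n := bfun_val_natAbs_lt x hn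
    have hy : y.1.natAbs - 1 < n := bfun_val_natAbs_lt y hn
    have hval : x.1.sign * sval π ε ⟨x.1.natAbs - 1, hx⟩ = y.1.sign * sval π ε ⟨y.1.natAbs - 1, hy⟩ := by
      have := congrArg Subtype.val hxy
      rwa [bfun, bfun, dif_pos hx, dif_pos hy] at this
    by_cases hx0 : x.1 = 0
    · -- lhs is 0
      have hzx : x.1.sign = 0 := by rw [hx0]; rfl
      have : y.1.sign * sval π ε ⟨y.1.natAbs - 1, hy⟩ = 0 := by
        rw [← hval, hzx, zero_mul]
      have hy0 : y.1.sign = 0 := by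
        rcases mul_eq_zero.mp this with h | h
        · exact h
        · exact absurd h (sval_bound' π ε _).2.2
      apply Subtype.ext
      rw [hx0, Int.sign_eq_zero_iff_zero.mp hy0]
    · have hy0 : y.1 ≠ 0 := by
        intro hy0
        apply hx0
        have hzy : y.1.sign = 0 := by rw [hy0]; rfl
        have : x.1.sign * sval π ε ⟨x.1.natAbs - 1, hx⟩ = 0 := by rw [hval, hzy, zero_mul]
        rcases mul_eq_zero.mp this with h | h
        · exact Int.sign_eq_zero_iff_zero.mp h
        · exact absurd h (sval_bound' π ε _).2.2
      -- compare absolute values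
      have habs : (x.1.sign * sval π ε ⟨x.1.natAbs - 1, hx⟩).natAbs
          = (π ⟨x.1.natAbs - 1, hx⟩ : ℕ) + 1 := by
        rw [Int.natAbs_mul, sval_natAbs]
        have : x.1.sign.natAbs = 1 := by
          rcases Int.lt_trichotomy x.1 0 with h' | h' | h'
          · rw [Int.sign_eq_neg_one_of_neg h']; rfl
          · exact absurd h' hx0
          · rw [Int.sign_eq_one_of_pos h']; rfl
        rw [this, one_mul]
      have habsy : (y.1.sign * sval π ε ⟨y.1.natAbs - 1, hy⟩).natAbs
          = (π ⟨y.1.natAbs - 1, hy⟩ : ℕ) + 1 := by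
        rw [Int.natAbs_mul, sval_natAbs]
        have : y.1.sign.natAbs = 1 := by
          rcases Int.lt_trichotomy y.1 0 with h' | h' | h'
          · rw [Int.sign_eq_neg_one_of_neg h']; rfl
          · exact absurd h' hy0
          · rw [Int.sign_eq_one_of_pos h']; rfl
        rw [this, one_mul]
      have hππ : π ⟨x.1.natAbs - 1, hx⟩ = π ⟨y.1.natAbs - 1, hy⟩ := by
        have := congrArg Int.natAbs hval
        rw [habs, habsy] at this
        exact Fin.ext (by omega)
      have hidx : (⟨x.1.natAbs - 1, hx⟩ : Fin n) = ⟨y.1.natAbs - 1, hy⟩ := π.injective hππ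
      have hnabs : x.1.natAbs = y.1.natAbs := by
        have hv : x.1.natAbs - 1 = y.1.natAbs - 1 := congrArg Fin.val hidx
        omega
      have hsign : x.1.sign = y.1.sign := by
        rw [hidx] at hval
        exact mul_right_cancel₀ (sval_bound' π ε _).2.2 hval
      apply Subtype.ext
      calc x.1 = x.1.sign * x.1.natAbs := (Int.sign_mul_natAbs x.1).symm
        _ = y.1.sign * y.1.natAbs := by rw [hsign, hnabs]
        _ = y.1 := Int.sign_mul_natAbs y.1

noncomputable def PsiP {n : ℕ} (π : Equiv.Perm (Fin n)) (ε : Fin n → Bool) : Equiv.Perm (BSet n) :=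
  Equiv.ofBijective (bfun π ε) ((Finite.injective_iff_bijective).mp (bfun_injective π ε))

@[simp] lemma PsiP_coe {n : ℕ} (π : Equiv.Perm (Fin n)) (ε : Fin n → Bool) :
    ⇑(PsiP π ε) = bfun π ε := rfl

lemma PsiP_signed {n : ℕ} (π : Equiv.Perm (Fin n)) (ε : Fin n → Bool) :
    IsSigned (PsiP π ε) := fun x => bfun_negB π ε x

lemma PsiP_desc {n : ℕ} (π : Equiv.Perm (Fin n)) (ε : Fin n → Bool) :
    descB (PsiP π ε) = descCount ((0:ℤ) :: Lw π ε) := by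
  have hfn : (fun i : Fin n => ((PsiP π ε) (posB i)).1) = sval π ε :=
    funext fun i => bfun_posB π ε i
  show descCount ((0:ℤ) :: List.ofFn fun i => ((PsiP π ε) (posB i)).1) = _
  rw [hfn, Lw]

lemma PsiP_negCount {n : ℕ} (π : Equiv.Perm (Fin n)) (ε : Fin n → Bool) :
    negCount (PsiP π ε) = Nc ε := by
  rw [negCount, Nc, Finset.card_filter]
  apply Finset.sum_congr rfl
  intro i _
  have h1 : ((PsiP π ε) (posB i)).1 = sval π ε i := bfun_posB π ε i
  by_cases hε : ε i
  · rw [if_pos hε, if_pos (by rw [h1]; exact (sval_neg_iff π ε i).mpr hε)]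
  · rw [if_neg hε, if_neg (by rw [h1]; intro hc; exact hε ((sval_neg_iff π ε i).mp hc))]

noncomputable def Ts (n k : ℕ) : ℤ :=
  ∑ σ ∈ Finset.univ.filter (fun σ : Equiv.Perm (BSet n) => IsSigned σ),
    (-1) ^ (negCount σ) * (if descB σ = k then 1 else 0)

lemma Gs_eq_Ts (n k : ℕ) : Gs n k = Ts n k := by
  rw [Gs, Ts]
  refine Finset.sum_bij (fun pe _ => PsiP pe.1 pe.2) ?_ ?_ ?_ ?_
  · intro pe _
    simp only [Finset.mem_filter]
    exact ⟨Finset.mem_univ _, PsiP_signed pe.1 pe.2⟩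
  · rintro ⟨π₁, ε₁⟩ _ ⟨π₂, ε₂⟩ _ h
    have hv : ∀ i, sval π₁ ε₁ i = sval π₂ ε₂ i := by
      intro i
      have h' := congrArg (fun σ : Equiv.Perm (BSet n) => (σ (posB i)).1) h
      simp only at h'
      rw [show ((PsiP π₁ ε₁) (posB i)).1 = sval π₁ ε₁ i from bfun_posB π₁ ε₁ i,
        show ((PsiP π₂ ε₂) (posB i)).1 = sval π₂ ε₂ i from bfun_posB π₂ ε₂ i] at h'
      exact h'
    have hε : ε₁ = ε₂ := by
      funext i
      have h1 := sval_neg_iff π₁ ε₁ i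
      have h2 := sval_neg_iff π₂ ε₂ i
      rw [hv i] at h1
      cases hb1 : ε₁ i <;> cases hb2 : ε₂ i <;> simp_all
    have hπ : π₁ = π₂ := by
      apply Equiv.ext
      intro i
      apply Fin.ext
      have h1 := sval_natAbs π₁ ε₁ i
      have h2 := sval_natAbs π₂ ε₂ i
      rw [hv i] at h1
      omega
    rw [hπ, hε]
  · intro σ hσm
    rw [Finset.mem_filter] at hσm
    have hσ : IsSigned σ := hσm.2
    have hmem0 : (0:ℤ) ∈ Finset.Icc (-(n:ℤ)) (n:ℤ) := by
      simp only [Finset.mem_Icc]; omega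
    have hσz : σ ⟨0, hmem0⟩ = ⟨0, hmem0⟩ := by
      have h1 := hσ ⟨0, hmem0⟩
      have h2 : negB ⟨0, hmem0⟩ = ⟨0, hmem0⟩ := Subtype.ext (by simp [negB])
      rw [h2] at h1
      exact Subtype.ext (show (σ ⟨0, hmem0⟩).1 = (0:ℤ) by omega)
    have hval0 : ∀ i : Fin n, (σ (posB i)).1 ≠ 0 := by
      intro i hv
      have he : σ (posB i) = σ ⟨0, hmem0⟩ := Subtype.ext (by rw [hv, hσz])
      have := σ.injective he
      have hvv := congrArg Subtype.val this
      simp only [posB] at hvv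
      omega
    have habs : ∀ i : Fin n, 1 ≤ (σ (posB i)).1.natAbs ∧ (σ (posB i)).1.natAbs ≤ n := by
      intro i
      have h2 := (σ (posB i)).2
      simp only [Finset.mem_Icc] at h2
      have := hval0 i
      omega
    have hplt : ∀ i : Fin n, (σ (posB i)).1.natAbs - 1 < n := fun i => by have := habs i; omega
    have hpinj : Function.Injective (fun i : Fin n => (⟨(σ (posB i)).1.natAbs - 1, hplt i⟩ : Fin n)) := by
      intro i j hij
      have hij' : (σ (posB i)).1.natAbs = (σ (posB j)).1.natAbs := by
        have hval := congrArg Fin.val hij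
        simp only at hval
        have h1 := habs i; have h2 := habs j
        omega
      rcases Int.natAbs_eq_natAbs_iff.mp hij' with he | he
      · have h3 := σ.injective (Subtype.ext he)
        have hvv := congrArg Subtype.val h3
        simp only [posB] at hvv
        exact Fin.ext (by omega)
      · exfalso
        have h2 : (σ (negB (posB j))).1 = -((σ (posB j)).1) := hσ (posB j)
        have h3 : σ (posB i) = σ (negB (posB j)) := Subtype.ext (by rw [h2, he])
        have h4 := σ.injective h3
        have hvv := congrArg Subtype.val h4
        simp only [posB, negB] at hvv
        omega
    have hpbij := (Finite.injective_iff_bijective).mp hpinj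
    have hposval : ∀ i : Fin n,
        (bfun (Equiv.ofBijective _ hpbij) (fun i => decide ((σ (posB i)).1 < 0)) (posB i)).1
          = (σ (posB i)).1 := by
      intro i
      rw [bfun_posB]
      show sval _ _ i = _
      have hpi : (((Equiv.ofBijective _ hpbij) i : Fin n) : ℕ) = (σ (posB i)).1.natAbs - 1 := rfl
      rw [sval, hpi]
      have h1 := habs i
      rcases lt_or_ge ((σ (posB i)).1) 0 with hneg | hpos
      · rw [if_pos (by simpa using hneg)]
        omega
      · rw [if_neg (by simpa using hpos)]
        omega
    refine ⟨(Equiv.ofBijective _ hpbij, fun i => decide ((σ (posB i)).1 < 0)), Finset.mem_univ _, ?_⟩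
    apply Equiv.ext
    intro x
    apply Subtype.ext
    show (bfun _ _ x).1 = (σ x).1
    rcases Int.lt_trichotomy x.1 0 with hx | hx | hx
    · have hy : (0:ℤ) < (negB x).1 := by
        show (0:ℤ) < -x.1; omega
      have hxy : x = negB (negB x) := Subtype.ext (by simp [negB])
      have h1 : (σ x).1 = -((σ (negB x)).1) := by
        have := hσ (negB x); rw [← hxy] at this; exact this
      have h2 : (bfun (Equiv.ofBijective _ hpbij) (fun i => decide ((σ (posB i)).1 < 0)) x).1
          = -((bfun (Equiv.ofBijective _ hpbij) (fun i => decide ((σ (posB i)).1 < 0)) (negB x)).1) := by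
        have := bfun_negB (Equiv.ofBijective _ hpbij) (fun i => decide ((σ (posB i)).1 < 0)) (negB x)
        rw [← hxy] at this; exact this
      have hn1 : 0 < n := by
        have := x.2; simp only [Finset.mem_Icc] at this; omega
      have hilt : (negB x).1.toNat - 1 < n := by
        have := (negB x).2; simp only [Finset.mem_Icc] at this; omega
      have hpos : posB (⟨(negB x).1.toNat - 1, hilt⟩ : Fin n) = negB x := Subtype.ext (by
        show ((((negB x).1.toNat - 1 : ℕ)) : ℤ) + 1 = (negB x).1
        omega)
      rw [h1, h2, ← hpos, hposval]
    · have hx0 : x = (⟨0, hmem0⟩ : BSet n) := Subtype.ext hx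
      rw [hx0]
      have : (σ (⟨0, hmem0⟩ : BSet n)).1 = 0 := by rw [hσz]
      rw [this]
      rw [bfun]
      split
      · show (0:ℤ).sign * _ = 0
        rw [Int.sign_zero, zero_mul]
      · rfl
    · have hilt : x.1.toNat - 1 < n := by
        have := x.2; simp only [Finset.mem_Icc] at this; omega
      have hpos : posB (⟨x.1.toNat - 1, hilt⟩ : Fin n) = x := Subtype.ext (by
        show (((x.1.toNat - 1 : ℕ)) : ℤ) + 1 = x.1
        omega)
      rw [← hpos, hposval]
  · intro pe _
    rw [PsiP_negCount, PsiP_desc]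

lemma filter_even_eq (n k : ℕ) :
    ((Finset.univ.filter fun σ : Equiv.Perm (BSet n) => IsSigned σ ∧ descB σ = k).filter
        fun σ => Even (negCount σ))
      = Finset.univ.filter fun σ : Equiv.Perm (BSet n) =>
          (IsSigned σ ∧ Even (negCount σ)) ∧ descB σ = k := by
  ext σ
  simp only [Finset.mem_filter, Finset.mem_univ, true_and]
  tauto

lemma filter_odd_eq (n k : ℕ) :
    ((Finset.univ.filter fun σ : Equiv.Perm (BSet n) => IsSigned σ ∧ descB σ = k).filter
        fun σ => ¬ Even (negCount σ))
      = Finset.univ.filter fun σ : Equiv.Perm (BSet n) =>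
          (IsSigned σ ∧ ¬ Even (negCount σ)) ∧ descB σ = k := by
  ext σ
  simp only [Finset.mem_filter, Finset.mem_univ, true_and]
  tauto

lemma card_split (n k : ℕ) : eulerianD n k + eulerianDt n k = eulerianB n k := by
  rw [eulerianD, eulerianDt, eulerianB, Fintype.card_subtype, Fintype.card_subtype,
    Fintype.card_subtype, ← filter_even_eq, ← filter_odd_eq]
  exact Finset.card_filter_add_card_filter_not _

lemma Ts_split (n k : ℕ) : Ts n k = (eulerianD n k : ℤ) - (eulerianDt n k : ℤ) := by
  have hstep : Ts n k = ∑ σ ∈ Finset.univ.filter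
      (fun σ : Equiv.Perm (BSet n) => IsSigned σ ∧ descB σ = k), (-1:ℤ) ^ (negCount σ) := by
    rw [Ts, Finset.sum_filter, Finset.sum_filter]
    apply Finset.sum_congr rfl
    intro σ _
    by_cases h1 : IsSigned σ <;> by_cases h2 : descB σ = k <;> simp [h1, h2]
  rw [hstep, ← Finset.sum_filter_add_sum_filter_not
    (Finset.univ.filter fun σ : Equiv.Perm (BSet n) => IsSigned σ ∧ descB σ = k)
    (fun σ => Even (negCount σ))]
  have he : ∀ σ ∈ (Finset.univ.filter fun σ : Equiv.Perm (BSet n) => IsSigned σ ∧ descB σ = k).filter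
      (fun σ => Even (negCount σ)), (-1:ℤ) ^ (negCount σ) = 1 := by
    intro σ hσ
    rw [Finset.mem_filter] at hσ
    exact Even.neg_one_pow hσ.2
  have ho : ∀ σ ∈ (Finset.univ.filter fun σ : Equiv.Perm (BSet n) => IsSigned σ ∧ descB σ = k).filter
      (fun σ => ¬ Even (negCount σ)), (-1:ℤ) ^ (negCount σ) = -1 := by
    intro σ hσ
    rw [Finset.mem_filter] at hσ
    exact Odd.neg_one_pow (Nat.not_even_iff_odd.mp hσ.2)
  rw [Finset.sum_congr rfl he, Finset.sum_congr rfl ho, Finset.sum_const, Finset.sum_const,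
    filter_even_eq, filter_odd_eq, eulerianD, eulerianDt, Fintype.card_subtype, Fintype.card_subtype]
  simp only [nsmul_eq_mul, mul_one, mul_neg]
  ring


theorem stmt9 (n k : ℕ) (h : k ≤ n) :
    2 * (eulerianD n k : ℤ) = (eulerianB n k : ℤ) + (-1) ^ k * (n.choose k : ℤ) ∧
    2 * (eulerianDt n k : ℤ) = (eulerianB n k : ℤ) - (-1) ^ k * (n.choose k : ℤ) := by
  have h1 : (eulerianD n k : ℤ) - (eulerianDt n k : ℤ) = (-1) ^ k * (n.choose k : ℤ) := by
    rw [← Ts_split, ← Gs_eq_Ts, Gs_eq]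
  have h2 : (eulerianD n k : ℤ) + (eulerianDt n k : ℤ) = (eulerianB n k : ℤ) := by
    exact_mod_cast congrArg (Nat.cast : ℕ → ℤ) (card_split n k)
  constructor <;> linarith
end
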